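/- arXiv:2210.03805 — 2 statements merged into one kernel-verified Lean document; each statement's English description precedes it below -/
import Mathlib

section
/- Counting heavy subspaces. Let 2 ≤ m ≤ d−1, let ε > 0, and let ν be a Borel probability measure on ℝP^{d−1} such that ν([L]) ≤ ε/4 for every L ∈ Gr(m−1,d). Then the set of subspaces L' ∈ Gr(m,d) with ν([L']) ≥ ε/2 is finite and contains at most N = ⌊2^{2m−1}/ε^m⌋ elements. -/
open MeasureTheory Matrix Filter
open scoped ENNReal

noncomputable section

/-- `SL(d, ℝ)`. -/
abbrev SL (d : ℕ) := Matrix.SpecialLinearGroup (Fin d) ℝ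

instance (d : ℕ) : TopologicalSpace (SL d) :=
  inferInstanceAs (TopologicalSpace { A : Matrix (Fin d) (Fin d) ℝ // A.det = 1 })

instance (d : ℕ) : MeasurableSpace (SL d) := borel _
instance (d : ℕ) : BorelSpace (SL d) := ⟨rfl⟩

/-- Operator norm of a real `d × d` matrix, acting on Euclidean space. -/
def opNorm {d : ℕ} (A : Matrix (Fin d) (Fin d) ℝ) : ℝ :=
  ‖Matrix.toEuclideanCLM (𝕜 := ℝ) A‖

/-- The norm `‖A‖` of `A ∈ SL(d, ℝ)`. -/
def slNorm {d : ℕ} (A : SL d) : ℝ := opNorm (A : Matrix (Fin d) (Fin d) ℝ)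

/-- `A` applied to a vector `v ∈ ℝ^d` (with the Euclidean norm). -/
def slVec {d : ℕ} (A : SL d) (v : EuclideanSpace ℝ (Fin d)) : EuclideanSpace ℝ (Fin d) :=
  Matrix.toEuclideanCLM (𝕜 := ℝ) (A : Matrix (Fin d) (Fin d) ℝ) v

/-- The random (reversed) product `Tₙ = Aₙ ⋯ A₂ A₁`, where `Aᵢ = ω (i-1)`. -/
def T {d : ℕ} (ω : ℕ → SL d) : ℕ → SL d
  | 0 => 1
  | n + 1 => ω n * T ω n

/-- The projective space `ℝP^{d-1}`. -/
abbrev Proj (d : ℕ) := Projectivization ℝ (Fin d → ℝ)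

instance (d : ℕ) : TopologicalSpace (Proj d) :=
  inferInstanceAs (TopologicalSpace (Quotient (projectivizationSetoid ℝ (Fin d → ℝ))))

instance (d : ℕ) : MeasurableSpace (Proj d) := borel _
instance (d : ℕ) : BorelSpace (Proj d) := ⟨rfl⟩

/-- The linear map induced by `A ∈ SL(d, ℝ)` is injective. -/
theorem toLin'_injective {d : ℕ} (A : SL d) :
    Function.Injective (Matrix.toLin' (A : Matrix (Fin d) (Fin d) ℝ)) := by
  apply Function.LeftInverse.injective
    (g := Matrix.toLin' ((A⁻¹ : SL d) : Matrix (Fin d) (Fin d) ℝ))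
  intro x
  rw [← Matrix.toLin'_mul_apply, ← Matrix.SpecialLinearGroup.coe_mul, inv_mul_cancel,
    Matrix.SpecialLinearGroup.coe_one, Matrix.toLin'_one, LinearMap.id_apply]

/-- The projective map `f_A : ℝP^{d-1} → ℝP^{d-1}` induced by `A ∈ SL(d, ℝ)`. -/
def projMap {d : ℕ} (A : SL d) : Proj d → Proj d :=
  Projectivization.map (Matrix.toLin' (A : Matrix (Fin d) (Fin d) ℝ)) (toLin'_injective A)

/-- The subset `[L] ⊆ ℝP^{d-1}` corresponding to a linear subspace `L ≤ ℝ^d`. -/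
def projSet {d : ℕ} (L : Submodule ℝ (Fin d → ℝ)) : Set (Proj d) :=
  {x : Proj d | x.submodule ≤ L}

/-- Finite moment condition for a single measure, with exponent `γ` and bound `C`. -/
def FiniteMomentCondition {d : ℕ} (γ C : ℝ) (μ : ProbabilityMeasure (SL d)) : Prop :=
  ∫⁻ A, ENNReal.ofReal (slNorm A ^ γ) ∂(μ : Measure (SL d)) < ENNReal.ofReal C

/-- Log-moment condition: `∫ log ‖A‖ dμ(A) < ∞`. -/
def LogMomentCondition {d : ℕ} (μ : ProbabilityMeasure (SL d)) : Prop :=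
  ∫⁻ A, ENNReal.ofReal (Real.log (slNorm A)) ∂(μ : Measure (SL d)) < ⊤

/-- Measures condition: there are no Borel probability measures `ν₁`, `ν₂` on `ℝP^{d-1}`
with `(f_A)_* ν₁ = ν₂` for `μ`-a.e. `A`. -/
def MeasuresCondition {d : ℕ} (μ : ProbabilityMeasure (SL d)) : Prop :=
  ¬ ∃ (ν₁ ν₂ : ProbabilityMeasure (Proj d)),
      ∀ᵐ A ∂(μ : Measure (SL d)),
        (ν₁ : Measure (Proj d)).map (projMap A) = (ν₂ : Measure (Proj d))

/-- `U ⊆ ℝ^d` is a (nonempty) finite union of proper nonzero linear subspaces. -/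
def IsFiniteUnionOfProperSubspaces {d : ℕ} (U : Set (Fin d → ℝ)) : Prop :=
  ∃ S : Set (Submodule ℝ (Fin d → ℝ)), S.Finite ∧ S.Nonempty ∧
    (∀ W ∈ S, W ≠ ⊥ ∧ W ≠ ⊤) ∧ U = ⋃ W ∈ S, (W : Set (Fin d → ℝ))

/-- `U ⊆ ℝ^d` is a (nonempty) finite union of `j`-dimensional linear subspaces. -/
def IsFiniteUnionOfDimSubspaces {d : ℕ} (j : ℕ) (U : Set (Fin d → ℝ)) : Prop :=
  ∃ S : Set (Submodule ℝ (Fin d → ℝ)), S.Finite ∧ S.Nonempty ∧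
    (∀ W ∈ S, Module.finrank ℝ W = j) ∧ U = ⋃ W ∈ S, (W : Set (Fin d → ℝ))

/-- Spaces condition: there are no two finite unions `U`, `U'` of proper nonzero subspaces
of `ℝ^d` such that `A(U) = U'` for `μ`-a.e. `A`. -/
def SpacesCondition {d : ℕ} (μ : ProbabilityMeasure (SL d)) : Prop :=
  ¬ ∃ U U' : Set (Fin d → ℝ), IsFiniteUnionOfProperSubspaces U ∧
      IsFiniteUnionOfProperSubspaces U' ∧
      ∀ᵐ (A : SL d) ∂(μ : Measure (SL d)),
        (fun v => Matrix.toLin' (A : Matrix (Fin d) (Fin d) ℝ) v) '' U = U'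

/-- `ℙ` is the product measure `μ₁ × μ₂ × ⋯` on sequences, characterized by its
finite-dimensional marginals. -/
def IsProductMeasure {d : ℕ} (μ : ℕ → ProbabilityMeasure (SL d))
    (ℙ : Measure (ℕ → SL d)) : Prop :=
  IsProbabilityMeasure ℙ ∧
    ∀ n : ℕ, ℙ.map (fun ω (i : Fin n) => ω i) =
      Measure.pi (fun i : Fin n => ((μ i : Measure (SL d))))

/-- `Lₙ = E log ‖Tₙ‖`. -/
def L {d : ℕ} (ℙ : Measure (ℕ → SL d)) (n : ℕ) : ℝ :=
  ∫ ω, Real.log (slNorm (T ω n)) ∂ℙ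

/-- `L_{[n,m]} = E log ‖A_m ⋯ A_{n+1}‖`. -/
def Lseg {d : ℕ} (ℙ : Measure (ℕ → SL d)) (n m : ℕ) : ℝ :=
  ∫ ω, Real.log (slNorm (T ω m * (T ω n)⁻¹)) ∂ℙ

namespace CountingAux

open Projectivization Topology Set Module Submodule

variable {d : ℕ}

/-- Nonzero vectors in `ℝ^d`. -/
abbrev NZ (d : ℕ) := { v : Fin d → ℝ // v ≠ 0 }

/-- The quotient map to projective space. -/
def pmk : NZ d → Proj d := fun v => Projectivization.mk ℝ v.1 v.2

lemma isQuotientMap_pmk : IsQuotientMap (pmk (d := d)) :=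
  isQuotientMap_quotient_mk'

lemma pmk_eq_iff (v w : NZ d) :
    pmk v = pmk w ↔ ∃ a : ℝˣ, a • (w : Fin d → ℝ) = v :=
  Projectivization.mk_eq_mk_iff ℝ _ _ v.2 w.2

lemma isOpenMap_pmk : IsOpenMap (pmk (d := d)) := by
  intro U hU
  rw [← isQuotientMap_pmk.isOpen_preimage]
  have h : pmk ⁻¹' (pmk '' U) =
      ⋃ a : ℝˣ, (fun w : NZ d => (⟨(a : ℝ) • (w : Fin d → ℝ),
        smul_ne_zero (Units.ne_zero a) w.2⟩ : NZ d)) ⁻¹' U := by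
    ext w
    simp only [Set.mem_preimage, Set.mem_image, Set.mem_iUnion]
    constructor
    · rintro ⟨u, hu, huw⟩
      obtain ⟨a, ha⟩ := (pmk_eq_iff u w).1 huw
      refine ⟨a, ?_⟩
      convert hu using 1
      ext1
      simpa [Units.smul_def] using ha
    · rintro ⟨a, ha⟩
      refine ⟨_, ha, ((pmk_eq_iff _ w).2 ⟨a, ?_⟩)⟩
      simp [Units.smul_def]
  rw [h]
  exact isOpen_iUnion fun a => hU.preimage
    (Continuous.subtype_mk (by fun_prop :
      Continuous fun w : NZ d => (a : ℝ) • (w : Fin d → ℝ)) _)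

lemma isOpenQuotientMap_pmk : IsOpenQuotientMap (pmk (d := d)) :=
  ⟨isQuotientMap_pmk.surjective, isQuotientMap_pmk.continuous, isOpenMap_pmk⟩

instance : SecondCountableTopology (Proj d) :=
  isQuotientMap_pmk.secondCountableTopology isOpenMap_pmk

lemma pmk_mem_projSet_iff {L : Submodule ℝ (Fin d → ℝ)} (v : NZ d) :
    pmk v ∈ projSet L ↔ (v : Fin d → ℝ) ∈ L := by
  simp [projSet, pmk, Projectivization.submodule_mk, Submodule.span_singleton_le_iff_mem]

lemma isClosed_projSet (L : Submodule ℝ (Fin d → ℝ)) : IsClosed (projSet L) := by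
  rw [← isQuotientMap_pmk.isClosed_preimage]
  have h : pmk ⁻¹' (projSet L) = ((↑) : NZ d → (Fin d → ℝ)) ⁻¹' (L : Set (Fin d → ℝ)) := by
    ext v; exact pmk_mem_projSet_iff v
  rw [h]
  exact (Submodule.closed_of_finiteDimensional L).preimage continuous_subtype_val

lemma measurableSet_projSet (L : Submodule ℝ (Fin d → ℝ)) : MeasurableSet (projSet L) :=
  (isClosed_projSet L).measurableSet

lemma projSet_bot : projSet (⊥ : Submodule ℝ (Fin d → ℝ)) = ∅ := by
  ext x
  simp only [projSet, Set.mem_setOf_eq, Set.mem_empty_iff_false, iff_false, le_bot_iff]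
  intro h
  have h1 := x.finrank_submodule
  rw [h, finrank_bot] at h1
  exact absurd h1 (by norm_num)

lemma projSet_mono {L L' : Submodule ℝ (Fin d → ℝ)} (h : L ≤ L') :
    projSet L ⊆ projSet L' := fun _ hx => le_trans hx h

/-- Span of the first `n` coordinates (as lines). -/
def sb {m : ℕ} (x : Fin m → Proj d) (n : ℕ) : Submodule ℝ (Fin d → ℝ) :=
  ⨆ i : Fin m, ⨆ _ : (i : ℕ) < n, (x i).submodule

lemma line_le_sb {m : ℕ} {x : Fin m → Proj d} {n : ℕ} {i : Fin m} (hi : (i : ℕ) < n) :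
    (x i).submodule ≤ sb x n :=
  le_iSup₂ (f := fun (j : Fin m) (_ : (j : ℕ) < n) => (x j).submodule) i hi

lemma sb_le {m : ℕ} {x : Fin m → Proj d} {n : ℕ} {W : Submodule ℝ (Fin d → ℝ)}
    (h : ∀ i : Fin m, (i : ℕ) < n → (x i).submodule ≤ W) : sb x n ≤ W :=
  iSup₂_le h

lemma sb_zero {m : ℕ} (x : Fin m → Proj d) : sb x 0 = ⊥ :=
  le_bot_iff.mp (sb_le (fun i hi => absurd hi (Nat.not_lt_zero _)))

lemma sb_congr {m : ℕ} {x y : Fin m → Proj d} {n : ℕ}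
    (h : ∀ i : Fin m, (i : ℕ) < n → x i = y i) : sb x n = sb y n := by
  apply le_antisymm
  · exact sb_le fun i hi => (h i hi) ▸ line_le_sb hi
  · exact sb_le fun i hi => (h i hi) ▸ line_le_sb hi

lemma sb_succ {m : ℕ} (x : Fin m → Proj d) {n : ℕ} (hn : n < m) :
    sb x (n + 1) = sb x n ⊔ (x ⟨n, hn⟩).submodule := by
  apply le_antisymm
  · apply sb_le; intro i hi
    rcases Nat.lt_succ_iff_lt_or_eq.mp hi with h | h
    · exact le_sup_of_le_left (line_le_sb h)
    · have hi' : i = ⟨n, hn⟩ := Fin.ext h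
      rw [hi']; exact le_sup_right
  · apply sup_le
    · exact sb_le fun i hi => line_le_sb (Nat.lt_succ_of_lt hi)
    · exact line_le_sb (Nat.lt_succ_self n)

lemma finrank_sb_le {m : ℕ} (x : Fin m → Proj d) : ∀ n, n ≤ m → finrank ℝ (sb x n) ≤ n := by
  intro n
  induction n with
  | zero => intro _; rw [sb_zero, finrank_bot]
  | succ n ih =>
    intro hn
    have hn' : n < m := hn
    rw [sb_succ x hn']
    have h1 := Submodule.finrank_sup_add_finrank_inf_eq (sb x n) ((x ⟨n, hn'⟩).submodule)
    have h2 := (x ⟨n, hn'⟩).finrank_submodule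
    have h3 := ih (le_of_lt hn')
    omega

lemma sb_pmk_eq_span {m n : ℕ} (hnm : n ≤ m) (v : Fin m → NZ d) :
    sb (fun i => pmk (v i)) n =
      Submodule.span ℝ (Set.range fun j : Fin n => ((v (Fin.castLE hnm j)) : Fin d → ℝ)) := by
  rw [Submodule.span_range_eq_iSup]
  apply le_antisymm
  · apply sb_le; intro i hi
    rw [show (pmk (v i)).submodule = ℝ ∙ ((v i : Fin d → ℝ)) from
      Projectivization.submodule_mk _ _]
    have he : v (Fin.castLE hnm ⟨(i : ℕ), hi⟩) = v i := by
      rfl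
    rw [← he]
    exact le_iSup (fun j : Fin n => ℝ ∙ ((v (Fin.castLE hnm j)) : Fin d → ℝ)) ⟨(i : ℕ), hi⟩
  · apply iSup_le; intro j
    have h1 : ((Fin.castLE hnm j : Fin m) : ℕ) < n := by simpa using j.2
    have h2 := line_le_sb (x := fun i => pmk (v i)) h1
    rwa [show (pmk (v (Fin.castLE hnm j))).submodule
        = ℝ ∙ ((v (Fin.castLE hnm j) : Fin d → ℝ)) from Projectivization.submodule_mk _ _] at h2

lemma rank_iff {m n : ℕ} (hnm : n ≤ m) (v : Fin m → NZ d) :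
    n ≤ finrank ℝ (sb (fun i => pmk (v i)) n) ↔
      LinearIndependent ℝ (fun j : Fin n => ((v (Fin.castLE hnm j)) : Fin d → ℝ)) := by
  rw [sb_pmk_eq_span hnm]
  constructor
  · intro h
    rw [linearIndependent_iff_card_eq_finrank_span]
    have hle := finrank_range_le_card (R := ℝ)
      (fun j : Fin n => ((v (Fin.castLE hnm j)) : Fin d → ℝ))
    simp only [Set.finrank] at hle ⊢
    simp only [Fintype.card_fin] at hle ⊢
    omega
  · intro h
    rw [finrank_span_eq_card h]
    simp

lemma isOpen_rank_set {m n : ℕ} (hnm : n ≤ m) :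
    IsOpen {x : Fin m → Proj d | n ≤ finrank ℝ (sb x n)} := by
  have hq : IsQuotientMap (Pi.map fun _ : Fin m => (pmk (d := d))) :=
    (IsOpenQuotientMap.piMap fun _ => isOpenQuotientMap_pmk).isQuotientMap
  rw [← hq.isOpen_preimage]
  have h : (Pi.map fun _ : Fin m => (pmk (d := d))) ⁻¹' {x | n ≤ finrank ℝ (sb x n)} =
      (fun (v : Fin m → NZ d) (j : Fin n) => ((v (Fin.castLE hnm j)) : Fin d → ℝ)) ⁻¹'
        {f : Fin n → (Fin d → ℝ) | LinearIndependent ℝ f} := by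
    ext v
    exact rank_iff hnm v
  rw [h]
  exact isOpen_setOf_linearIndependent.preimage
    (continuous_pi fun j => continuous_subtype_val.comp (continuous_apply _))

lemma measurableSet_rank_set {m n : ℕ} (hnm : n ≤ m) :
    MeasurableSet {x : Fin m → Proj d | n ≤ finrank ℝ (sb x n)} :=
  (isOpen_rank_set hnm).measurableSet

end CountingAux

namespace CountingAux

open MeasureTheory Module

variable {d : ℕ}

/-- The good event for subspace `L'` at stage `n`: the first `n` coordinates lie in
`[L']` and their lines span an `n`-dimensional subspace. -/
def G {m : ℕ} (L' : Submodule ℝ (Fin d → ℝ)) (n : ℕ) : Set (Fin m → Proj d) :=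
  {x | (∀ i : Fin m, (i : ℕ) < n → x i ∈ projSet L') ∧ n ≤ finrank ℝ (sb x n)}

lemma measurableSet_G {m : ℕ} (L' : Submodule ℝ (Fin d → ℝ)) {n : ℕ} (hnm : n ≤ m) :
    MeasurableSet (G (d := d) (m := m) L' n) := by
  have h1 : MeasurableSet {x : Fin m → Proj d | ∀ i : Fin m, (i : ℕ) < n → x i ∈ projSet L'} := by
    have he : {x : Fin m → Proj d | ∀ i : Fin m, (i : ℕ) < n → x i ∈ projSet L'} =
        ⋂ i : Fin m, ⋂ (_ : (i : ℕ) < n), (fun x : Fin m → Proj d => x i) ⁻¹' projSet L' := by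
      ext x; simp
    rw [he]
    exact MeasurableSet.iInter fun i => MeasurableSet.iInter fun _ =>
      (measurableSet_projSet L').preimage (measurable_pi_apply i)
  exact h1.inter (measurableSet_rank_set hnm)

lemma G_zero {m : ℕ} (L' : Submodule ℝ (Fin d → ℝ)) :
    G (d := d) (m := m) L' 0 = Set.univ := by
  ext x
  simp [G]

/-- Insert a value at position `i₀` (non-dependent version). -/
def ins {k : ℕ} (i₀ : Fin (k + 1)) (t : Proj d) (y : Fin k → Proj d) : Fin (k + 1) → Proj d :=
  Fin.insertNth i₀ t y

lemma ins_same {k : ℕ} (i₀ : Fin (k + 1)) (t : Proj d) (y : Fin k → Proj d) :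
    ins i₀ t y i₀ = t := by
  simp [ins]

lemma insertNth_eq_on_ne {k : ℕ} (i₀ : Fin (k + 1)) (t t' : Proj d) (y : Fin k → Proj d)
    (i : Fin (k + 1)) (hi : i ≠ i₀) :
    ins i₀ t y i = ins i₀ t' y i := by
  obtain ⟨j, rfl⟩ := Fin.exists_succAbove_eq hi
  unfold ins
  rw [Fin.insertNth_apply_succAbove, Fin.insertNth_apply_succAbove]

lemma mem_G_insertNth_iff {k n : ℕ} (hn : n < k + 1) (L' : Submodule ℝ (Fin d → ℝ))
    (t t' : Proj d) (y : Fin k → Proj d) :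
    ins ⟨n, hn⟩ t y ∈ G L' n ↔ ins ⟨n, hn⟩ t' y ∈ G L' n := by
  have hcoord : ∀ i : Fin (k + 1), (i : ℕ) < n →
      ins ⟨n, hn⟩ t y i = ins ⟨n, hn⟩ t' y i := by
    intro i hi
    refine insertNth_eq_on_ne _ _ _ _ i ?_
    intro h
    rw [h] at hi
    exact absurd hi (lt_irrefl n)
  simp only [G, Set.mem_setOf_eq]
  rw [sb_congr hcoord]
  exact and_congr (forall_congr' fun i => forall_congr' fun hi => by rw [hcoord i hi]) Iff.rfl

/-- The key inductive step: adding one more coordinate costs a factor `ε/2` (first step)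
or `ε/4` (later steps). -/
lemma step {k : ℕ} (ν : Measure (Proj d)) [IsProbabilityMeasure ν] (x₀ : Proj d) (ε : ℝ)
    (hε : 0 < ε) (L' : Submodule ℝ (Fin d → ℝ))
    (hL : ENNReal.ofReal (ε / 2) ≤ ν (projSet L'))
    (hsmall : ∀ W : Submodule ℝ (Fin d → ℝ), finrank ℝ W ≤ k →
      ν (projSet W) ≤ ENNReal.ofReal (ε / 4))
    {n : ℕ} (hn : n < k + 1) :
    (if n = 0 then ENNReal.ofReal (ε / 2) else ENNReal.ofReal (ε / 4)) *
        Measure.pi (fun _ : Fin (k + 1) => ν) (G (m := k + 1) L' n) ≤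
      Measure.pi (fun _ : Fin (k + 1) => ν) (G (m := k + 1) L' (n + 1)) := by
  classical
  set e : ℝ≥0∞ := if n = 0 then ENNReal.ofReal (ε / 2) else ENNReal.ofReal (ε / 4) with he
  set μ := Measure.pi (fun _ : Fin (k + 1) => ν) with hμ
  set μ' := Measure.pi (fun _ : Fin k => ν) with hμ'
  set i₀ : Fin (k + 1) := ⟨n, hn⟩ with hi₀
  set ψ := MeasurableEquiv.piFinSuccAbove (fun _ : Fin (k + 1) => Proj d) i₀ with hψ
  have mp : MeasurePreserving ψ μ (ν.prod μ') := by
    have := measurePreserving_piFinSuccAbove (fun _ : Fin (k + 1) => ν) i₀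
    exact this
  have hψs : ∀ (t : Proj d) (y : Fin k → Proj d), ψ.symm (t, y) = ins i₀ t y := by
    intro t y
    rfl
  -- the trace of `G L' n` on the second factor
  set Tn : Set (Fin k → Proj d) := {y | ins i₀ x₀ y ∈ G L' n} with hTn
  have hTn_meas : MeasurableSet Tn := by
    have : Tn = (fun y : Fin k → Proj d => ψ.symm (x₀, y)) ⁻¹' (G L' n) := by
      ext y
      simp [hψs, hTn]
    rw [this]
    exact (measurableSet_G L' (le_of_lt hn)).preimage
      (ψ.symm.measurable.comp measurable_prodMk_left)
  -- `G L' n` pulled back is `univ ×ˢ Tn`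
  have hGn : ψ.symm ⁻¹' (G L' n) = Set.univ ×ˢ Tn := by
    ext p
    obtain ⟨t, y⟩ := p
    simp only [Set.mem_preimage, Set.mem_prod, Set.mem_univ, true_and, hψs, hTn,
      Set.mem_setOf_eq]
    exact mem_G_insertNth_iff hn L' t x₀ y
  -- slice lower bound
  have hslice : ∀ y ∈ Tn, e ≤ ν {t : Proj d | ins i₀ t y ∈ G L' (n + 1)} := by
    intro y hy
    set Wy := sb (ins i₀ x₀ y) n with hWy
    have hsub : projSet L' \ projSet Wy ⊆ {t : Proj d | ins i₀ t y ∈ G L' (n + 1)} := by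
      intro t ht
      obtain ⟨htL, htW⟩ := ht
      have hcoord : ∀ i : Fin (k + 1), (i : ℕ) < n →
          ins i₀ t y i = ins i₀ x₀ y i := by
        intro i hi
        refine insertNth_eq_on_ne _ _ _ _ i ?_
        intro h
        rw [h, hi₀] at hi
        exact absurd hi (lt_irrefl n)
      have hsb_eq : sb (ins i₀ t y) n = Wy := sb_congr hcoord
      have hGy : ins i₀ x₀ y ∈ G L' n := hy
      constructor
      · intro i hi
        rcases Nat.lt_succ_iff_lt_or_eq.mp hi with h | h
        · rw [hcoord i h]
          exact hGy.1 i h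
        · have hii : i = i₀ := by rw [hi₀]; exact Fin.ext h
          rw [hii, ins_same]
          exact htL
      · have h1 : sb (ins i₀ t y) n < sb (ins i₀ t y) n ⊔
            (ins i₀ t y i₀).submodule := by
          refine lt_of_le_of_ne le_sup_left ?_
          intro hcontr
          apply htW
          have hc2 : (ins i₀ t y i₀).submodule ≤ sb (ins i₀ t y) n :=
            sup_eq_left.mp hcontr.symm
          rw [ins_same, hsb_eq] at hc2
          exact hc2
        have h2 := Submodule.finrank_lt_finrank_of_lt h1
        have h3 : n ≤ finrank ℝ (sb (ins i₀ t y) n) := by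
          rw [hsb_eq]; exact hGy.2
        have h4 : sb (ins i₀ t y) (n + 1) = sb (ins i₀ t y) n ⊔
            (ins i₀ t y i₀).submodule := by
          rw [sb_succ _ hn, ← hi₀]
        rw [h4]
        exact lt_of_le_of_lt h3 h2
    have hmeas : ν (projSet L' \ projSet Wy) ≤
        ν {t : Proj d | Fin.insertNth i₀ t y ∈ G L' (n + 1)} := measure_mono hsub
    refine le_trans ?_ hmeas
    rcases Nat.eq_zero_or_pos n with h0 | hpos
    · subst h0
      rw [hWy, sb_zero, projSet_bot, Set.diff_empty]
      simpa [he] using hL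
    · have hW_small : ν (projSet Wy) ≤ ENNReal.ofReal (ε / 4) := by
        apply hsmall
        rw [hWy]
        have := finrank_sb_le (ins i₀ x₀ y) n (le_of_lt hn)
        omega
      have h1 : ν (projSet L') - ν (projSet Wy) ≤ ν (projSet L' \ projSet Wy) :=
        le_measure_diff
      have h2 : ENNReal.ofReal (ε / 4) ≤ ν (projSet L') - ν (projSet Wy) := by
        have : ENNReal.ofReal (ε / 4) = ENNReal.ofReal (ε / 2) - ENNReal.ofReal (ε / 4) := by
          rw [← ENNReal.ofReal_sub _ (by positivity)]
          congr 1
          ring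
        rw [this]
        exact tsub_le_tsub hL hW_small
      have : e = ENNReal.ofReal (ε / 4) := by
        rw [he, if_neg (Nat.pos_iff_ne_zero.mp hpos)]
      rw [this]
      exact le_trans h2 h1
  -- put it together with Fubini
  have hmeasn1 : MeasurableSet (ψ.symm ⁻¹' (G (m := k + 1) L' (n + 1))) :=
    (measurableSet_G L' hn).preimage ψ.symm.measurable
  have key1 : μ (G (m := k + 1) L' (n + 1)) = (ν.prod μ') (ψ.symm ⁻¹' (G L' (n + 1))) :=
    ((MeasurePreserving.symm ψ mp).measure_preimage (measurableSet_G L' hn).nullMeasurableSet).symm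
  have key2 : μ (G (m := k + 1) L' n) = μ' Tn := by
    have h1 : μ (G (m := k + 1) L' n) = (ν.prod μ') (ψ.symm ⁻¹' (G L' n)) :=
      ((MeasurePreserving.symm ψ mp).measure_preimage (measurableSet_G L' (le_of_lt hn)).nullMeasurableSet).symm
    rw [h1, hGn, Measure.prod_prod, measure_univ, one_mul]
  rw [key1, key2]
  rw [Measure.prod_apply_symm hmeasn1]
  have hpoint : ∀ y : Fin k → Proj d,
      Tn.indicator (fun _ => e) y ≤ ν ((fun t => (t, y)) ⁻¹' (ψ.symm ⁻¹' (G L' (n + 1)))) := by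
    intro y
    by_cases hy : y ∈ Tn
    · rw [Set.indicator_of_mem hy]
      exact le_trans (hslice y hy) (le_of_eq rfl)
    · rw [Set.indicator_of_notMem hy]
      exact zero_le
  calc e * μ' Tn = ∫⁻ y, Tn.indicator (fun _ => e) y ∂μ' := by
        rw [lintegral_indicator hTn_meas, setLIntegral_const, mul_comm]
    _ ≤ ∫⁻ y, ν ((fun t => (t, y)) ⁻¹' (ψ.symm ⁻¹' (G L' (n + 1)))) ∂μ' := lintegral_mono hpoint

lemma G_lower {k : ℕ} (ν : Measure (Proj d)) [IsProbabilityMeasure ν] (x₀ : Proj d) (ε : ℝ)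
    (hε : 0 < ε) (L' : Submodule ℝ (Fin d → ℝ))
    (hL : ENNReal.ofReal (ε / 2) ≤ ν (projSet L'))
    (hsmall : ∀ W : Submodule ℝ (Fin d → ℝ), finrank ℝ W ≤ k →
      ν (projSet W) ≤ ENNReal.ofReal (ε / 4)) :
    ENNReal.ofReal (ε / 2) * ENNReal.ofReal (ε / 4) ^ k ≤
      Measure.pi (fun _ : Fin (k + 1) => ν) (G (m := k + 1) L' (k + 1)) := by
  classical
  set f : ℕ → ℝ≥0∞ := fun j => if j = 0 then ENNReal.ofReal (ε / 2) else ENNReal.ofReal (ε / 4)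
    with hf
  have main : ∀ n, n ≤ k + 1 → (∏ j ∈ Finset.range n, f j) ≤
      Measure.pi (fun _ : Fin (k + 1) => ν) (G (m := k + 1) L' n) := by
    intro n
    induction n with
    | zero =>
      intro _
      rw [Finset.range_zero, Finset.prod_empty, G_zero]
      simp
    | succ n ih =>
      intro hn1
      have hn : n < k + 1 := hn1
      calc ∏ j ∈ Finset.range (n + 1), f j = (∏ j ∈ Finset.range n, f j) * f n :=
            Finset.prod_range_succ f n
        _ ≤ Measure.pi (fun _ : Fin (k + 1) => ν) (G (m := k + 1) L' n) * f n :=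
            mul_le_mul_left (ih (le_of_lt hn)) _
        _ = f n * Measure.pi (fun _ : Fin (k + 1) => ν) (G (m := k + 1) L' n) := mul_comm _ _
        _ ≤ _ := step ν x₀ ε hε L' hL hsmall hn
  have hprod : (∏ j ∈ Finset.range (k + 1), f j) =
      ENNReal.ofReal (ε / 2) * ENNReal.ofReal (ε / 4) ^ k := by
    rw [Finset.prod_range_succ']
    have h1 : ∀ j ∈ Finset.range k, f (j + 1) = ENNReal.ofReal (ε / 4) := by
      intro j _
      simp [hf]
    rw [Finset.prod_congr rfl h1, Finset.prod_const, Finset.card_range]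
    simp [hf, mul_comm]
  rw [← hprod]
  exact main (k + 1) le_rfl

lemma G_disjoint {k : ℕ} {L₁ L₂ : Submodule ℝ (Fin d → ℝ)}
    (h₁ : finrank ℝ L₁ = k + 1) (h₂ : finrank ℝ L₂ = k + 1) (hne : L₁ ≠ L₂) :
    Disjoint (G (d := d) (m := k + 1) L₁ (k + 1)) (G (d := d) (m := k + 1) L₂ (k + 1)) := by
  rw [Set.disjoint_left]
  intro x hx1 hx2
  have e1 : sb x (k + 1) = L₁ := by
    apply Submodule.eq_of_le_of_finrank_le
    · exact sb_le fun i hi => hx1.1 i hi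
    · rw [h₁]; exact hx1.2
  have e2 : sb x (k + 1) = L₂ := by
    apply Submodule.eq_of_le_of_finrank_le
    · exact sb_le fun i hi => hx2.1 i hi
    · rw [h₂]; exact hx2.2
  exact hne (e1 ▸ e2)

lemma exists_superspace {j : ℕ} (hj : j ≤ d) (W : Submodule ℝ (Fin d → ℝ))
    (hW : finrank ℝ W ≤ j) :
    ∃ W' : Submodule ℝ (Fin d → ℝ), W ≤ W' ∧ finrank ℝ W' = j := by
  have hT : finrank ℝ (Fin d → ℝ) = d := by
    simp [Module.finrank_pi]
  have main : ∀ i, finrank ℝ W ≤ i → i ≤ j →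
      ∃ W' : Submodule ℝ (Fin d → ℝ), W ≤ W' ∧ finrank ℝ W' = i := by
    intro i
    induction i with
    | zero =>
      intro h0 _
      exact ⟨W, le_rfl, by omega⟩
    | succ i ih =>
      intro hi hij
      rcases Nat.lt_or_ge (finrank ℝ W) (i + 1) with hlt | hge
      · obtain ⟨W', hWW', hW'⟩ := ih (by omega) (by omega)
        have hW'top : W' < ⊤ := by
          refine lt_of_le_of_ne le_top ?_
          intro h
          rw [h, finrank_top, hT] at hW'
          omega
        obtain ⟨v, _, hvW'⟩ := SetLike.exists_of_lt hW'top
        have hv0 : v ≠ 0 := fun h => hvW' (h ▸ W'.zero_mem)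
        refine ⟨W' ⊔ (ℝ ∙ v), le_trans hWW' le_sup_left, ?_⟩
        have hlt2 : W' < W' ⊔ (ℝ ∙ v) := by
          refine lt_of_le_of_ne le_sup_left ?_
          intro h
          exact hvW' (sup_eq_left.mp h.symm (Submodule.mem_span_singleton_self v))
        have h2 := Submodule.finrank_lt_finrank_of_lt hlt2
        have h3 := Submodule.finrank_sup_add_finrank_inf_eq W' (ℝ ∙ v)
        have h4 : finrank ℝ (ℝ ∙ v) = 1 := finrank_span_singleton hv0
        omega
      · exact ⟨W, le_rfl, by omega⟩
  exact main j hW le_rfl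

end CountingAux

/-- **Counting heavy subspaces** (Lemma 4.2).
If every `(m-1)`-dimensional subspace carries `ν`-measure at most `ε/4`, then there are at
most `⌊2^{2m-1} / ε^m⌋` subspaces `L' ∈ Gr(m,d)` with `ν([L']) ≥ ε/2`. -/
theorem counting_heavy_subspaces
    (d m : ℕ) (hm : 2 ≤ m) (hmd : m ≤ d - 1)
    (ε : ℝ) (hε : 0 < ε) (ν : ProbabilityMeasure (Proj d))
    (hν : ∀ Lsub : Submodule ℝ (Fin d → ℝ), Module.finrank ℝ Lsub = m - 1 →
      (ν : Measure (Proj d)) (projSet Lsub) ≤ ENNReal.ofReal (ε / 4)) :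
    {L' : Submodule ℝ (Fin d → ℝ) | Module.finrank ℝ L' = m ∧
        ENNReal.ofReal (ε / 2) ≤ (ν : Measure (Proj d)) (projSet L')}.Finite ∧
      {L' : Submodule ℝ (Fin d → ℝ) | Module.finrank ℝ L' = m ∧
        ENNReal.ofReal (ε / 2) ≤ (ν : Measure (Proj d)) (projSet L')}.ncard ≤
          Nat.floor ((2 : ℝ) ^ (2 * m - 1) / ε ^ m) := by
  classical
  obtain ⟨k, rfl⟩ : ∃ k, m = k + 1 := ⟨m - 1, by omega⟩
  have hd : k + 2 ≤ d := by omega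
  set S : Set (Submodule ℝ (Fin d → ℝ)) :=
    {L' | Module.finrank ℝ L' = k + 1 ∧
      ENNReal.ofReal (ε / 2) ≤ (ν : Measure (Proj d)) (projSet L')} with hS
  have hsmall : ∀ W : Submodule ℝ (Fin d → ℝ), Module.finrank ℝ W ≤ k →
      (ν : Measure (Proj d)) (projSet W) ≤ ENNReal.ofReal (ε / 4) := by
    intro W hW
    obtain ⟨W', hWW', hW'⟩ := CountingAux.exists_superspace (by omega : k ≤ d) W hW
    exact le_trans (measure_mono (CountingAux.projSet_mono hWW')) (hν W' (by omega))
  have hx : (fun _ : Fin d => (1 : ℝ)) ≠ 0 := by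
    intro h
    have h0 := congr_fun h ⟨0, by omega⟩
    norm_num at h0
  set x₀ : Proj d := Projectivization.mk ℝ (fun _ => 1) hx with hx₀
  set μ : Measure (Fin (k + 1) → Proj d) :=
    Measure.pi (fun _ => (ν : Measure (Proj d))) with hμ
  set c : ℝ≥0∞ := ENNReal.ofReal (ε / 2) * ENNReal.ofReal (ε / 4) ^ k with hc
  set r : ℝ := (ε / 2) * (ε / 4) ^ k with hr
  have hrpos : 0 < r := by rw [hr]; positivity
  have hcr : c = ENNReal.ofReal r := by
    rw [hc, hr, ENNReal.ofReal_mul (by positivity), ENNReal.ofReal_pow (by positivity)]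
  have hcardbound : ∀ F : Finset (Submodule ℝ (Fin d → ℝ)), (↑F : Set _) ⊆ S →
      (F.card : ℝ) ≤ (2 : ℝ) ^ (2 * (k + 1) - 1) / ε ^ (k + 1) := by
    intro F hF
    have hdisj : (↑F : Set (Submodule ℝ (Fin d → ℝ))).PairwiseDisjoint
        (fun L => CountingAux.G (d := d) (m := k + 1) L (k + 1)) := by
      intro L₁ h₁ L₂ h₂ hne12
      exact CountingAux.G_disjoint (hF h₁).1 (hF h₂).1 hne12
    have hmeas : ∀ L ∈ F, MeasurableSet (CountingAux.G (d := d) (m := k + 1) L (k + 1)) :=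
      fun L _ => CountingAux.measurableSet_G L le_rfl
    have hsum : (F.card : ℝ≥0∞) * c ≤ 1 := by
      calc (F.card : ℝ≥0∞) * c = ∑ _L ∈ F, c := by rw [Finset.sum_const, nsmul_eq_mul]
        _ ≤ ∑ L ∈ F, μ (CountingAux.G (d := d) (m := k + 1) L (k + 1)) := by
            refine Finset.sum_le_sum ?_
            intro L hL
            exact CountingAux.G_lower _ x₀ ε hε L (hF hL).2 hsmall
        _ = μ (⋃ L ∈ F, CountingAux.G (d := d) (m := k + 1) L (k + 1)) :=
            (measure_biUnion_finset hdisj hmeas).symm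
        _ ≤ μ Set.univ := measure_mono (Set.subset_univ _)
        _ = 1 := measure_univ
    have h2 : ENNReal.ofReal ((F.card : ℝ) * r) ≤ ENNReal.ofReal 1 := by
      rw [ENNReal.ofReal_mul (by positivity), ENNReal.ofReal_natCast, ← hcr, ENNReal.ofReal_one]
      exact hsum
    have h3 : (F.card : ℝ) * r ≤ 1 := (ENNReal.ofReal_le_ofReal_iff (by norm_num)).mp h2
    have h4 : (F.card : ℝ) ≤ 1 / r := by
      rw [le_div_iff₀ hrpos]
      exact h3
    refine le_trans h4 (le_of_eq ?_)
    rw [hr, show 2 * (k + 1) - 1 = 2 * k + 1 from by omega]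
    have h4k : (4 : ℝ) ^ k = 2 ^ (2 * k) := by
      rw [show (4 : ℝ) = 2 ^ 2 from by norm_num, ← pow_mul]
    rw [div_pow, h4k, pow_succ (2 : ℝ) (2 * k), pow_succ ε k]
    field_simp
  have hNat : ∀ F : Finset (Submodule ℝ (Fin d → ℝ)), (↑F : Set _) ⊆ S →
      F.card ≤ Nat.floor ((2 : ℝ) ^ (2 * (k + 1) - 1) / ε ^ (k + 1)) := by
    intro F hF
    exact Nat.le_floor (hcardbound F hF)
  have hfin : S.Finite := by
    by_contra hinf
    obtain ⟨t, hts, htfin, hcard⟩ := Set.Infinite.exists_subset_ncard_eq hinf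
      (Nat.floor ((2 : ℝ) ^ (2 * (k + 1) - 1) / ε ^ (k + 1)) + 1)
    have hsub : (↑htfin.toFinset : Set (Submodule ℝ (Fin d → ℝ))) ⊆ S := by
      rw [Set.Finite.coe_toFinset]; exact hts
    have hF := hNat htfin.toFinset hsub
    rw [← Set.ncard_eq_toFinset_card t htfin] at hF
    omega
  refine ⟨hfin, ?_⟩
  have hsub : (↑hfin.toFinset : Set (Submodule ℝ (Fin d → ℝ))) ⊆ S := by
    rw [Set.Finite.coe_toFinset]
  have hF := hNat hfin.toFinset hsub
  rwa [← Set.ncard_eq_toFinset_card S hfin] at hF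
end
end

section
/- Near-conservation of the squared atom weights forces alignment of random images. For any ε > 0 there exists δ > 0 such that the following holds for any compact metric space X, any Borel probability measure μ on Homeo(X), and any Borel probability measure ν on X. Let ν' = μ*ν, let E = Σ_x ν({x})² and E' = Σ_y ν'({y})² be the sums of squared atom weights of ν and ν', and let ρ = Σ_x ν({x})² δ_x and ρ' = Σ_y ν'({y})² δ_y (sums over the atoms of ν and ν' respectively). If E − E' < δ E, then with μ-probability at least 1−ε (over f ∼ μ) the total variation distance ‖f_*ρ − ρ'‖_TV does not exceed ε E. -/
open MeasureTheory
open scoped ENNReal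

noncomputable section

/-- Topology of uniform convergence (= compact-open topology) on `Homeo(X)`. -/
instance homeoTopologicalSpace {X : Type*} [TopologicalSpace X] :
    TopologicalSpace (X ≃ₜ X) :=
  TopologicalSpace.induced (fun f : X ≃ₜ X => (f : C(X, X))) inferInstance

instance homeoMeasurableSpace {X : Type*} [TopologicalSpace X] :
    MeasurableSpace (X ≃ₜ X) := borel _

instance homeoBorelSpace {X : Type*} [TopologicalSpace X] :
    BorelSpace (X ≃ₜ X) := ⟨rfl⟩

/-- `μ * ν = ∫ f_* ν dμ(f)`: the law of `f x` with `f ∼ μ`, `x ∼ ν` independent. -/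
def mconv {X : Type*} [TopologicalSpace X] [MeasurableSpace X]
    (μ : Measure (X ≃ₜ X)) (ν : Measure X) : Measure X :=
  μ.bind fun f => ν.map f

/-- The maximal weight of an atom of a measure. -/
def maxAtom {X : Type*} [MeasurableSpace X] (ν : Measure X) : ℝ≥0∞ :=
  ⨆ x : X, ν {x}

/-- Iterated convolution `μₙ * ⋯ * μ₁ * ν`. -/
def iterConv {X : Type*} [TopologicalSpace X] [MeasurableSpace X]
    (μ : ℕ → ProbabilityMeasure (X ≃ₜ X)) (ν : Measure X) : ℕ → Measure X
  | 0 => ν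
  | n + 1 => mconv (μ n : Measure (X ≃ₜ X)) (iterConv μ ν n)

open scoped Classical in
/-- Relative entropy (Kullback–Leibler divergence) `h(ν | ν')`. -/
def relEnt {X : Type*} [MeasurableSpace X] (ν ν' : Measure X) : ℝ≥0∞ :=
  if ν ≪ ν' ∧ Integrable (fun x => Real.log (ν.rnDeriv ν' x).toReal) ν
  then ENNReal.ofReal (∫ x, Real.log (ν.rnDeriv ν' x).toReal ∂ν)
  else ⊤

/-- The Furstenberg entropy `Φ_μ(ν) = ∫ h(f_*ν | μ*ν) dμ(f)`. -/
def furstEnt {X : Type*} [TopologicalSpace X] [MeasurableSpace X]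
    (μ : Measure (X ≃ₜ X)) (ν : Measure X) : ℝ≥0∞ :=
  ∫⁻ f, relEnt (ν.map f) (mconv μ ν) ∂μ

/-- The conditional version `Φ_μ(ν | ν') = ∫ h(f_*ν | ν') dμ(f)`. -/
def furstEntCond {X : Type*} [TopologicalSpace X] [MeasurableSpace X]
    (μ : Measure (X ≃ₜ X)) (ν ν' : Measure X) : ℝ≥0∞ :=
  ∫⁻ f, relEnt (ν.map f) ν' ∂μ

/-- The law of `f ∘ g`, where `f ∼ μ'` and `g ∼ μ` independently. -/
def hconv {X : Type*} [TopologicalSpace X] (μ' μ : Measure (X ≃ₜ X)) :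
    Measure (X ≃ₜ X) :=
  (μ'.prod μ).map fun p => p.2.trans p.1

/-- Total variation distance between two (finite Borel) measures. -/
def tvDist {X : Type*} [MeasurableSpace X] (α β : Measure X) : ℝ≥0∞ :=
  (⨆ (s : Set X) (_ : MeasurableSet s), (α s - β s)) +
    (⨆ (s : Set X) (_ : MeasurableSet s), (β s - α s))

/-- Sum of squares of the weights of atoms. -/
def sqAtomMass {X : Type*} [MeasurableSpace X] (ν : Measure X) : ℝ≥0∞ :=
  ∑' x : X, (ν {x}) ^ 2

/-- The measure `Σ_x ν({x})² δ_x`. -/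
def sqAtomMeasure {X : Type*} [MeasurableSpace X] (ν : Measure X) : Measure X :=
  Measure.sum fun x : X => (ν {x}) ^ 2 • Measure.dirac x


section AuxSA

lemma sq_rpow_half (c : ℝ≥0∞) : (c ^ 2) ^ (1/2 : ℝ) = c := by
  rw [← ENNReal.rpow_natCast c 2, ← ENNReal.rpow_mul]; norm_num

lemma rpow_half_sq (c : ℝ≥0∞) : (c ^ (1/2:ℝ)) ^ 2 = c := by
  rw [← ENNReal.rpow_natCast (c ^ (1/2:ℝ)) 2, ← ENNReal.rpow_mul]; norm_num

lemma my_add_sq_le (x y : ℝ≥0∞) : (x+y)^2 ≤ 4*(x^2+y^2) := by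
  rcases le_total x y with h | h
  · calc (x+y)^2 ≤ (y+y)^2 := by gcongr
    _ = 4*y^2 := by ring
    _ ≤ 4*(x^2+y^2) := by gcongr; exact le_add_self
  · calc (x+y)^2 ≤ (x+x)^2 := by gcongr
    _ = 4*x^2 := by ring
    _ ≤ 4*(x^2+y^2) := by gcongr; exact le_self_add

lemma tsum_CS {ι : Type*} (u v : ι → ℝ≥0∞) :
    ∑' i, u i * v i ≤ (∑' i, u i ^ 2) ^ (1/2:ℝ) * (∑' i, v i ^ 2) ^ (1/2:ℝ) := by
  letI : MeasurableSpace ι := ⊤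
  haveI : MeasurableSingletonClass ι := ⟨fun _ => trivial⟩
  have h := ENNReal.lintegral_mul_le_Lp_mul_Lq (Measure.count : Measure ι)
    (⟨by norm_num, by norm_num, by norm_num⟩ : Real.HolderConjugate 2 2) (f := u) (g := v)
    (measurable_from_top.aemeasurable) (measurable_from_top.aemeasurable)
  simp only [lintegral_count, Pi.mul_apply] at h
  calc ∑' i, u i * v i ≤ (∑' i, u i ^ (2:ℝ)) ^ (1/2:ℝ) * (∑' i, v i ^ (2:ℝ)) ^ (1/2:ℝ) := h
  _ = (∑' i, u i ^ 2) ^ (1/2:ℝ) * (∑' i, v i ^ 2) ^ (1/2:ℝ) := by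
      simp [ENNReal.rpow_natCast]

lemma tsum_tsub_le {ι : Type*} (u v : ι → ℝ≥0∞) :
    (∑' i, u i) - ∑' i, v i ≤ ∑' i, (u i - v i) := by
  rw [tsub_le_iff_right, ← ENNReal.tsum_add]
  exact ENNReal.tsum_le_tsum fun i => le_tsub_add

lemma sub_sq_key {x y : ℝ≥0∞} (h : y ≤ x) (hx : x ≠ ∞) :
    x ^ 2 - y ^ 2 = (x - y) * (x + y) := by
  have hy : y ≠ ∞ := (h.trans_lt hx.lt_top).ne
  obtain ⟨c, rfl⟩ : ∃ c, x = c + y := ⟨x - y, (tsub_add_cancel_of_le h).symm⟩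
  have h1 : c + y - y = c := ENNReal.add_sub_cancel_right hy
  have h2 : (c + y) ^ 2 = (c^2 + 2*c*y) + y ^ 2 := by ring
  rw [h1, h2, ENNReal.add_sub_cancel_right (by simp [hy] : y^2 ≠ ∞)]
  ring

lemma abs_sq_sub_le {x y : ℝ≥0∞} (hx : x ≠ ∞) (hy : y ≠ ∞) :
    (x^2 - y^2) + (y^2 - x^2) ≤ (((x-y)^2 + (y-x)^2) ^ (1/2:ℝ)) * (x + y) := by
  rcases le_total y x with h | h
  · have h1 : y - x = 0 := tsub_eq_zero_of_le h
    have h2 : y^2 - x^2 = 0 := tsub_eq_zero_of_le (by gcongr)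
    rw [h1, h2, sub_sq_key h hx, add_zero]
    have e : ((x-y)^2 + (0:ℝ≥0∞)^2) = (x-y)^2 := by norm_num
    rw [e, sq_rpow_half]
  · have h1 : x - y = 0 := tsub_eq_zero_of_le h
    have h2 : x^2 - y^2 = 0 := tsub_eq_zero_of_le (by gcongr)
    rw [h1, h2, sub_sq_key h hy, zero_add]
    have e : ((0:ℝ≥0∞)^2 + (y-x)^2) = (y-x)^2 := by norm_num
    rw [e, sq_rpow_half, add_comm x y]

lemma dsq_eq_ofReal {x y : ℝ≥0∞} (hx : x ≠ ∞) (hy : y ≠ ∞) :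
    (x - y)^2 + (y - x)^2 = ENNReal.ofReal ((x.toReal - y.toReal)^2) := by
  rcases le_total y x with h | h
  · have h1 : y - x = 0 := tsub_eq_zero_of_le h
    have hne : x - y ≠ ∞ := (tsub_le_self.trans_lt hx.lt_top).ne
    rw [h1, ← ENNReal.toReal_sub_of_le h hx, ENNReal.ofReal_pow ENNReal.toReal_nonneg,
      ENNReal.ofReal_toReal hne]
    norm_num
  · have h1 : x - y = 0 := tsub_eq_zero_of_le h
    have hne : y - x ≠ ∞ := (tsub_le_self.trans_lt hy.lt_top).ne
    have h3 : (x.toReal - y.toReal)^2 = (y.toReal - x.toReal)^2 := by ring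
    rw [h1, h3, ← ENNReal.toReal_sub_of_le h hy, ENNReal.ofReal_pow ENNReal.toReal_nonneg,
      ENNReal.ofReal_toReal hne]
    norm_num

lemma lintegral_dsq_add_sq {Ω : Type*} [MeasurableSpace Ω] (μ : Measure Ω)
    [IsProbabilityMeasure μ] (A : Ω → ℝ≥0∞) (hA : AEMeasurable A μ) (hA1 : ∀ ω, A ω ≤ 1) :
    (∫⁻ ω, ((A ω - ∫⁻ t, A t ∂μ)^2 + ((∫⁻ t, A t ∂μ) - A ω)^2) ∂μ) + (∫⁻ t, A t ∂μ)^2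
      = ∫⁻ ω, (A ω)^2 ∂μ := by
  set b := ∫⁻ t, A t ∂μ with hbdef
  have hAne : ∀ ω, A ω ≠ ∞ := fun ω => ((hA1 ω).trans_lt (by norm_num)).ne
  have hb1 : b ≤ 1 := by
    calc b ≤ ∫⁻ _, 1 ∂μ := lintegral_mono hA1
    _ = 1 := by simp
  have hbne : b ≠ ∞ := (hb1.trans_lt (by norm_num)).ne
  set g : Ω → ℝ := fun ω => (A ω).toReal with hgdef
  have hg : AEMeasurable g μ := ENNReal.measurable_toReal.comp_aemeasurable hA
  have hg0 : ∀ ω, 0 ≤ g ω := fun ω => ENNReal.toReal_nonneg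
  have hg1 : ∀ ω, g ω ≤ 1 := fun ω => by
    simpa using ENNReal.toReal_mono (by norm_num) (hA1 ω)
  have hgi : Integrable g μ :=
    ⟨hg.aestronglyMeasurable, HasFiniteIntegral.of_bounded (C := 1)
      (ae_of_all _ fun ω => by rw [Real.norm_eq_abs, abs_of_nonneg (hg0 ω)]; exact hg1 ω)⟩
  have hg2i : Integrable (fun ω => g ω ^ 2) μ :=
    ⟨(hg.pow_const 2).aestronglyMeasurable, HasFiniteIntegral.of_bounded (C := 1)
      (ae_of_all _ fun ω => by
        rw [Real.norm_eq_abs, abs_of_nonneg (sq_nonneg _)]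
        nlinarith [hg0 ω, hg1 ω])⟩
  set c : ℝ := ∫ ω, g ω ∂μ with hcdef
  have hc0 : 0 ≤ c := integral_nonneg hg0
  have hbc : b = ENNReal.ofReal c := by
    rw [hbdef, hcdef, ofReal_integral_eq_lintegral_ofReal hgi (ae_of_all _ hg0)]
    exact lintegral_congr fun ω => (ENNReal.ofReal_toReal (hAne ω)).symm
  have hgci : Integrable (fun ω => (g ω - c) ^ 2) μ := by
    have : Integrable (fun ω => g ω ^ 2 - (2*c) * g ω + c ^ 2) μ :=
      ((hg2i.sub (hgi.const_mul (2*c))).add (integrable_const _))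
    exact this.congr (ae_of_all _ fun ω => by ring)
  have hreal : ∫ ω, (g ω - c) ^ 2 ∂μ = (∫ ω, g ω ^ 2 ∂μ) - c ^ 2 := by
    have h1 : ∫ ω, (g ω - c) ^ 2 ∂μ = ∫ ω, (g ω ^ 2 - 2 * c * g ω + c ^ 2) ∂μ :=
      integral_congr_ae (ae_of_all _ fun ω => by ring)
    have hsubi : Integrable (fun ω => g ω ^ 2 - 2 * c * g ω) μ := hg2i.sub (hgi.const_mul (2*c))
    rw [h1, integral_add hsubi (integrable_const _),
      integral_sub hg2i (hgi.const_mul (2*c)), integral_const_mul, integral_const]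
    simp only [measure_univ, probReal_univ, ENNReal.toReal_one, one_smul, ← hcdef]
    ring
  have hdsq : ∀ ω, (A ω - b)^2 + (b - A ω)^2 = ENNReal.ofReal ((g ω - c)^2) := by
    intro ω
    rw [dsq_eq_ofReal (hAne ω) hbne, hbc, ENNReal.toReal_ofReal hc0]
  have hA2 : ∀ ω, (A ω)^2 = ENNReal.ofReal (g ω ^ 2) := fun ω => by
    rw [ENNReal.ofReal_pow (hg0 ω), ENNReal.ofReal_toReal (hAne ω)]
  have hvar0 : 0 ≤ ∫ ω, (g ω - c)^2 ∂μ := integral_nonneg fun ω => sq_nonneg _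
  calc (∫⁻ ω, ((A ω - b)^2 + (b - A ω)^2) ∂μ) + b^2
      = ENNReal.ofReal (∫ ω, (g ω - c)^2 ∂μ) + ENNReal.ofReal (c^2) := by
        rw [lintegral_congr hdsq,
          ← ofReal_integral_eq_lintegral_ofReal hgci (ae_of_all _ fun ω => sq_nonneg _),
          hbc, ← ENNReal.ofReal_pow hc0]
    _ = ENNReal.ofReal ((∫ ω, (g ω - c)^2 ∂μ) + c^2) := by
        rw [ENNReal.ofReal_add hvar0 (sq_nonneg c)]
    _ = ENNReal.ofReal (∫ ω, g ω ^ 2 ∂μ) := by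
        rw [hreal]; congr 1
        have hc2 : c^2 ≤ ∫ ω, g ω ^ 2 ∂μ := by nlinarith [hvar0, hreal]
        linarith
    _ = ∫⁻ ω, (A ω)^2 ∂μ := by
        rw [ofReal_integral_eq_lintegral_ofReal hg2i (ae_of_all _ fun ω => sq_nonneg _)]
        exact lintegral_congr fun ω => (hA2 ω).symm

lemma tsum_sq_meas_le_one {X : Type*} [MeasurableSpace X] [MeasurableSingletonClass X]
    (ν : Measure X) [IsProbabilityMeasure ν] : (∑' x : X, ν {x} ^ 2) ≤ 1 := by
  have h1 : (∑' x : X, ν {x} ^ 2) ≤ ∑' x : X, ν {x} := by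
    refine ENNReal.tsum_le_tsum fun x => ?_
    rw [sq]
    calc ν {x} * ν {x} ≤ 1 * ν {x} := mul_le_mul_left prob_le_one _
    _ = ν {x} := one_mul _
  refine h1.trans ?_
  have h2 := tsum_meas_le_meas_iUnion_of_disjoint ν
    (As := fun x : X => {x}) (fun x => measurableSet_singleton x)
    (fun i j hij => by simpa using hij)
  simpa using h2.trans_eq (by rw [Set.iUnion_of_singleton]; exact measure_univ)

lemma bind_apply_ae {α β : Type*} [MeasurableSpace α] [MeasurableSpace β]
    {m : Measure α} {f : α → Measure β} {s : Set β} (hs : MeasurableSet s)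
    (hf : AEMeasurable f m) : m.bind f s = ∫⁻ a, f a s ∂m := by
  rw [Measure.bind, Measure.join_apply hs,
    lintegral_map' (Measure.measurable_coe hs).aemeasurable hf]

end AuxSA

/-- **Near-conservation of the squared atom weights forces alignment of random images**
(Lemma 4.1). For any `ε > 0` there is `δ > 0` such that for any compact metric space `X`,
any probability measure `μ` on `Homeo(X)` and any probability measure `ν` on `X`:
if `E - E' < δ E`, then with `μ`-probability at least `1 - ε` the total variation distance
`‖f_*ρ - ρ'‖_TV` is at most `ε E`. -/
theorem squared_atoms_alignment :
    ∀ ε : ℝ, 0 < ε → ∃ δ : ℝ, 0 < δ ∧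
      ∀ (X : Type) [MetricSpace X] [CompactSpace X] [MeasurableSpace X] [BorelSpace X],
        ∀ (μ : ProbabilityMeasure (X ≃ₜ X)) (ν : ProbabilityMeasure X),
          sqAtomMass (ν : Measure X) -
              sqAtomMass (mconv (μ : Measure (X ≃ₜ X)) (ν : Measure X)) <
            ENNReal.ofReal δ * sqAtomMass (ν : Measure X) →
          ENNReal.ofReal (1 - ε) ≤
            (μ : Measure (X ≃ₜ X)) {f : X ≃ₜ X |
              tvDist ((sqAtomMeasure (ν : Measure X)).map f)
                  (sqAtomMeasure (mconv (μ : Measure (X ≃ₜ X)) (ν : Measure X))) ≤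
                ENNReal.ofReal ε * sqAtomMass (ν : Measure X)} := by
  intro ε hε
  refine ⟨ε^3/64, by positivity, ?_⟩
  intro X iM iC iMS iBS μ ν hyp
  by_cases hε1 : 1 ≤ ε
  · have h0 : ENNReal.ofReal (1 - ε) = 0 := by
      rw [ENNReal.ofReal_eq_zero]; linarith
    rw [h0]; exact bot_le
  push_neg at hε1
  set δ : ℝ := ε^3/64 with hδdef
  have hδ1 : δ ≤ 1 := by
    have h3 : ε^3 < 1 := pow_lt_one₀ hε.le hε1 (by norm_num)
    rw [hδdef]; linarith
  set E : ℝ≥0∞ := sqAtomMass (ν : Measure X) with hEdef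
  have hE1 : E ≤ 1 := tsum_sq_meas_le_one _
  have hEtop : E ≠ ∞ := (hE1.trans_lt (by norm_num)).ne
  by_cases hm : AEMeasurable (fun f : X ≃ₜ X => (ν : Measure X).map ⇑f) (μ : Measure (X ≃ₜ X))
  swap
  · exfalso
    have hz : mconv (μ : Measure (X ≃ₜ X)) (ν : Measure X) = 0 := by
      show ((μ : Measure (X ≃ₜ X)).map fun f : X ≃ₜ X => (ν : Measure X).map ⇑f).join = 0
      rw [Measure.map_of_not_aemeasurable hm, Measure.join_zero]
    rw [hz] at hyp
    have h00 : sqAtomMass (0 : Measure X) = 0 := by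
      simp [sqAtomMass]
    rw [h00, tsub_zero] at hyp
    have hle : ENNReal.ofReal δ * E ≤ E := by
      calc ENNReal.ofReal δ * E ≤ 1 * E := by
            gcongr
            exact ENNReal.ofReal_le_one.2 hδ1
      _ = E := one_mul E
    exact absurd (hyp.trans_le hle) (lt_irrefl E)
  -- main branch
  set ν' : Measure X := mconv (μ : Measure (X ≃ₜ X)) (ν : Measure X) with hν'def
  have hbind : ν' = (μ : Measure (X ≃ₜ X)).bind (fun f : X ≃ₜ X => (ν : Measure X).map ⇑f) := rfl
  set E' : ℝ≥0∞ := sqAtomMass ν' with hE'def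
  set A : (X ≃ₜ X) → X → ℝ≥0∞ := fun f y => (ν : Measure X).map ⇑f {y} with hAdef
  set b : X → ℝ≥0∞ := fun y => ν' {y} with hbdef
  have hmm : ∀ f : X ≃ₜ X, Measurable ⇑f := fun f => f.continuous.measurable
  have hA_eq : ∀ (f : X ≃ₜ X) (y : X), A f y = (ν : Measure X) {f.symm y} := by
    intro f y
    show (ν : Measure X).map ⇑f {y} = (ν : Measure X) {f.symm y}
    rw [Measure.map_apply (hmm f) (measurableSet_singleton y)]
    congr 1
    ext z
    simp only [Set.mem_preimage, Set.mem_singleton_iff]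
    constructor
    · rintro rfl; rw [Homeomorph.symm_apply_apply]
    · rintro rfl; exact f.apply_symm_apply y
  have hA1 : ∀ f y, A f y ≤ 1 := fun f y => prob_le_one
  have hAne : ∀ f y, A f y ≠ ∞ := fun f y => ((hA1 f y).trans_lt (by norm_num)).ne
  have hAm : ∀ y : X, AEMeasurable (fun f => A f y) (μ : Measure (X ≃ₜ X)) := fun y =>
    (Measure.measurable_coe (measurableSet_singleton y)).comp_aemeasurable hm
  have hbI : ∀ y : X, b y = ∫⁻ f, A f y ∂(μ : Measure (X ≃ₜ X)) := fun y => by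
    show ν' {y} = _
    rw [hbind, bind_apply_ae (measurableSet_singleton y) hm]
  haveI hIP : IsProbabilityMeasure ν' := by
    constructor
    rw [hbind, bind_apply_ae MeasurableSet.univ hm]
    have h1 : ∀ f : X ≃ₜ X, (ν : Measure X).map ⇑f Set.univ = 1 := fun f => by
      rw [Measure.map_apply (hmm f) MeasurableSet.univ]; simp
    simp only [h1]
    simp
  have hb1 : ∀ y, b y ≤ 1 := fun y => prob_le_one
  have hbne : ∀ y, b y ≠ ∞ := fun y => ((hb1 y).trans_lt (by norm_num)).ne
  have hE0 : E ≠ 0 := by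
    intro h
    rw [h] at hyp
    simp at hyp
  have hsumA : ∀ f : X ≃ₜ X, (∑' y : X, (A f y)^2) = E := by
    intro f
    have h1 := Equiv.tsum_eq f.toEquiv.symm (fun x => ((ν : Measure X) {x})^2)
    calc (∑' y : X, (A f y)^2) = ∑' y : X, ((ν : Measure X) {f.toEquiv.symm y})^2 :=
        tsum_congr fun y => by rw [hA_eq f y]; rfl
    _ = ∑' x : X, ((ν : Measure X) {x})^2 := h1
    _ = E := rfl
  set T : Set X := {y : X | 0 < b y} with hTdef
  have hTc : T.Countable := by
    have h := Measure.countable_meas_pos_of_disjoint_of_meas_iUnion_ne_top (μ := ν')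
      (As := fun y : X => ({y} : Set X)) (fun y => measurableSet_singleton y)
      (fun i j hij => by simpa using hij)
      (by rw [Set.iUnion_of_singleton]; exact measure_ne_top ν' _)
    exact h
  haveI : Countable ↥T := hTc.to_subtype
  have hbT : ∀ y : X, y ∉ T → b y = 0 := by
    intro y hy
    by_contra hne
    exact hy (pos_iff_ne_zero.mpr hne)
  have hE'T : E' = ∑' y : T, (b y)^2 := by
    have hX : E' = ∑' y : X, (b y)^2 := rfl
    rw [hX, ← Summable.tsum_add_tsum_compl (s := T) ENNReal.summable ENNReal.summable]
    have hz : (∑' y : ↥Tᶜ, (b (y:X))^2) = 0 := by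
      refine (Summable.tsum_eq_zero_iff ENNReal.summable).2 fun y => ?_
      rw [hbT y y.2]
      simp
    rw [hz, add_zero]
  set S : (X ≃ₜ X) → ℝ≥0∞ :=
    fun f => ∑' y : T, ((A f y - b y)^2 + (b y - A f y)^2) with hSdef
  set Q : (X ≃ₜ X) → ℝ≥0∞ := fun f => ∑' y : T, (A f y)^2 with hQdef
  set P : (X ≃ₜ X) → ℝ≥0∞ := fun f => E - Q f with hPdef
  have hQle : ∀ f, Q f ≤ E := by
    intro f
    rw [← hsumA f]
    exact Summable.tsum_le_tsum_of_inj (Subtype.val) Subtype.val_injective (fun y _ => bot_le)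
      (fun y => le_rfl) ENNReal.summable ENNReal.summable
  have hQfne : ∀ f, Q f ≠ ∞ := fun f => (((hQle f).trans hE1).trans_lt (by norm_num)).ne
  have hQc : ∀ f : X ≃ₜ X, Q f + (∑' y : ↥Tᶜ, (A f (y:X))^2) = E := fun f =>
    (Summable.tsum_add_tsum_compl ENNReal.summable ENNReal.summable).trans (hsumA f)
  have hPc : ∀ f : X ≃ₜ X, (∑' y : ↥Tᶜ, (A f (y:X))^2) = P f := by
    intro f
    simp only [hPdef]
    rw [← hQc f, ENNReal.add_sub_cancel_left (hQfne f)]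
  have hdsqm : ∀ y : T, AEMeasurable
      (fun f : X ≃ₜ X => (A f (y:X) - b y)^2 + (b y - A f y)^2) (μ : Measure (X ≃ₜ X)) := by
    intro y
    exact (((hAm y).sub aemeasurable_const).pow_const 2).add
      ((aemeasurable_const.sub (hAm y)).pow_const 2)
  have hSm : AEMeasurable S (μ : Measure (X ≃ₜ X)) := AEMeasurable.ennreal_tsum hdsqm
  have hQm : AEMeasurable Q (μ : Measure (X ≃ₜ X)) :=
    AEMeasurable.ennreal_tsum fun y => (hAm y).pow_const 2
  have hPm : AEMeasurable P (μ : Measure (X ≃ₜ X)) := aemeasurable_const.sub hQm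
  have hVar : ∀ y : T, (∫⁻ f, ((A f (y:X) - b y)^2 + (b y - A f y)^2) ∂(μ : Measure (X ≃ₜ X)))
      + (b y)^2 = ∫⁻ f, (A f (y:X))^2 ∂(μ : Measure (X ≃ₜ X)) := by
    intro y
    have h := lintegral_dsq_add_sq (μ : Measure (X ≃ₜ X)) (fun f => A f (y:X)) (hAm y)
      (fun f => hA1 f y)
    rw [← hbI y] at h
    exact h
  set W : ℝ≥0∞ := ∑' y : T, ∫⁻ f, (A f (y:X))^2 ∂(μ : Measure (X ≃ₜ X)) with hWdef
  have hQint : ∫⁻ f, Q f ∂(μ : Measure (X ≃ₜ X)) = W :=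
    lintegral_tsum fun y => (hAm y).pow_const 2
  have hWle : W ≤ E := by
    rw [← hQint]
    calc ∫⁻ f, Q f ∂(μ : Measure (X ≃ₜ X)) ≤ ∫⁻ _, E ∂(μ : Measure (X ≃ₜ X)) :=
        lintegral_mono hQle
    _ = E := by simp
  have hWne : W ≠ ∞ := ((hWle.trans hE1).trans_lt (by norm_num)).ne
  have hE'W : E' ≤ W := by
    rw [hE'T, hWdef]
    exact ENNReal.tsum_le_tsum fun y => le_add_self.trans_eq (hVar y)
  have hSint : (∫⁻ f, S f ∂(μ : Measure (X ≃ₜ X))) + E' = W := by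
    simp only [hSdef]
    rw [lintegral_tsum hdsqm, hE'T, ← ENNReal.tsum_add]
    exact tsum_congr fun y => hVar y
  have hSle : ∫⁻ f, S f ∂(μ : Measure (X ≃ₜ X)) ≤ E - E' :=
    ENNReal.le_sub_of_add_le_right ((hE'W.trans hWle).trans_lt hEtop.lt_top).ne (hSint.le.trans hWle)
  have hPle : ∫⁻ f, P f ∂(μ : Measure (X ≃ₜ X)) ≤ E - E' := by
    have h1 : ∫⁻ f, P f ∂(μ : Measure (X ≃ₜ X)) = E - W := by
      simp only [hPdef]
      rw [lintegral_sub' hQm (by rw [hQint]; exact hWne) (ae_of_all _ hQle),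
        lintegral_const, measure_univ, mul_one, hQint]
    rw [h1]
    exact tsub_le_tsub_left hE'W E
  set c1 : ℝ≥0∞ := ENNReal.ofReal (ε^2/32) * E with hc1def
  set c2 : ℝ≥0∞ := ENNReal.ofReal (ε/2) * E with hc2def
  have hc10 : c1 ≠ 0 := mul_ne_zero (ENNReal.ofReal_pos.2 (by positivity)).ne' hE0
  have hc1top : c1 ≠ ∞ := ENNReal.mul_ne_top ENNReal.ofReal_ne_top hEtop
  have hc20 : c2 ≠ 0 := mul_ne_zero (ENNReal.ofReal_pos.2 (by positivity)).ne' hE0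
  have hc2top : c2 ≠ ∞ := ENNReal.mul_ne_top ENNReal.ofReal_ne_top hEtop
  have hδc1 : ENNReal.ofReal δ * E ≤ c1 * ENNReal.ofReal (ε/2) := by
    have h1 : ENNReal.ofReal δ * E = (ENNReal.ofReal (ε^2/32) * ENNReal.ofReal (ε/2)) * E := by
      rw [← ENNReal.ofReal_mul (by positivity)]
      congr 1
      rw [hδdef]
      ring
    rw [h1, hc1def]
    exact le_of_eq (by ring)
  have hδc2 : ENNReal.ofReal δ * E ≤ c2 * ENNReal.ofReal (ε/2) := by
    have h1 : ENNReal.ofReal δ * E ≤ (ENNReal.ofReal (ε/2) * ENNReal.ofReal (ε/2)) * E := by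
      refine mul_le_mul_left ?_ E
      rw [← ENNReal.ofReal_mul (by positivity)]
      refine ENNReal.ofReal_le_ofReal ?_
      rw [hδdef]
      nlinarith [mul_nonneg (mul_nonneg hε.le hε.le) (by linarith : (0:ℝ) ≤ 1 - ε)]
    refine h1.trans (le_of_eq ?_)
    rw [hc2def]; ring
  have hMS : (μ : Measure (X ≃ₜ X)) {f : X ≃ₜ X | c1 ≤ S f} ≤ ENNReal.ofReal (ε/2) := by
    have h := mul_meas_ge_le_lintegral₀ hSm c1
    have h2 : c1 * (μ : Measure (X ≃ₜ X)) {f : X ≃ₜ X | c1 ≤ S f}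
        < c1 * ENNReal.ofReal (ε/2) :=
      h.trans_lt (lt_of_le_of_lt hSle (hyp.trans_le hδc1))
    exact ((ENNReal.mul_lt_mul_iff_right hc10 hc1top).mp h2).le
  have hMP : (μ : Measure (X ≃ₜ X)) {f : X ≃ₜ X | c2 ≤ P f} ≤ ENNReal.ofReal (ε/2) := by
    have h := mul_meas_ge_le_lintegral₀ hPm c2
    have h2 : c2 * (μ : Measure (X ≃ₜ X)) {f : X ≃ₜ X | c2 ≤ P f}
        < c2 * ENNReal.ofReal (ε/2) :=
      h.trans_lt (lt_of_le_of_lt hPle (hyp.trans_le hδc2))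
    exact ((ENNReal.mul_lt_mul_iff_right hc20 hc2top).mp h2).le
  -- pointwise formulas
  have hαβ : ∀ (f : X ≃ₜ X) (s : Set X), MeasurableSet s →
      ((sqAtomMeasure (ν : Measure X)).map ⇑f) s
        = ∑' y : X, (A f y)^2 * s.indicator 1 y := by
    intro f s hs
    rw [Measure.map_apply (hmm f) hs]
    have hps : MeasurableSet (⇑f ⁻¹' s) := hs.preimage (hmm f)
    show (Measure.sum fun x : X => ((ν : Measure X) {x})^2 • Measure.dirac x) (⇑f ⁻¹' s) = _
    rw [Measure.sum_apply _ hps]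
    have h1 : ∀ x : X, (((ν : Measure X) {x})^2 • Measure.dirac x) (⇑f ⁻¹' s)
        = ((ν : Measure X) {x})^2 * (⇑f ⁻¹' s).indicator 1 x := by
      intro x
      rw [Measure.smul_apply, Measure.dirac_apply' _ hps, smul_eq_mul]
    rw [tsum_congr h1, ← Equiv.tsum_eq f.toEquiv.symm
      (fun x => ((ν : Measure X) {x})^2 * (⇑f ⁻¹' s).indicator 1 x)]
    refine tsum_congr fun y => ?_
    have h2 : (f.toEquiv.symm y) = f.symm y := rfl
    rw [h2, ← hA_eq f y]
    congr 1
    have hmem : (f.symm y ∈ ⇑f ⁻¹' s) ↔ y ∈ s := by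
      simp [Set.mem_preimage, f.apply_symm_apply]
    by_cases hy : y ∈ s
    · rw [Set.indicator_of_mem hy, Set.indicator_of_mem (hmem.mpr hy)]
      rfl
    · rw [Set.indicator_of_notMem hy, Set.indicator_of_notMem (fun c => hy (hmem.mp c))]
  have hβs : ∀ s : Set X, MeasurableSet s →
      sqAtomMeasure ν' s = ∑' y : X, (b y)^2 * s.indicator 1 y := by
    intro s hs
    show (Measure.sum fun x : X => (ν' {x})^2 • Measure.dirac x) s = _
    rw [Measure.sum_apply _ hs]
    refine tsum_congr fun y => ?_
    rw [Measure.smul_apply, Measure.dirac_apply' _ hs, smul_eq_mul]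
  have hpoint : ∀ f : X ≃ₜ X, S f < c1 → P f < c2 →
      tvDist ((sqAtomMeasure (ν : Measure X)).map ⇑f) (sqAtomMeasure ν')
        ≤ ENNReal.ofReal ε * E := by
    intro f hfS hfP
    have hsup1 : (⨆ (s : Set X) (_ : MeasurableSet s),
        (((sqAtomMeasure (ν : Measure X)).map ⇑f) s - sqAtomMeasure ν' s))
        ≤ (∑' y : T, ((A f (y:X))^2 - (b y)^2)) + P f := by
      refine iSup₂_le fun s hs => ?_
      rw [hαβ f s hs, hβs s hs]
      calc (∑' y : X, (A f y)^2 * s.indicator 1 y) - ∑' y : X, (b y)^2 * s.indicator 1 y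
          ≤ ∑' y : X, ((A f y)^2 * s.indicator 1 y - (b y)^2 * s.indicator 1 y) :=
            tsum_tsub_le _ _
        _ ≤ ∑' y : X, ((A f y)^2 - (b y)^2) := by
            refine ENNReal.tsum_le_tsum fun y => ?_
            by_cases hy : y ∈ s
            · simp [Set.indicator_of_mem hy]
            · simp [Set.indicator_of_notMem hy]
        _ = (∑' y : T, ((A f (y:X))^2 - (b y)^2))
            + ∑' y : ↥Tᶜ, ((A f (y:X))^2 - (b y)^2) :=
            (Summable.tsum_add_tsum_compl ENNReal.summable ENNReal.summable).symm
        _ ≤ (∑' y : T, ((A f (y:X))^2 - (b y)^2)) + P f := by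
            refine add_le_add_right ?_ _
            refine le_trans (ENNReal.tsum_le_tsum fun y => tsub_le_self) ?_
            exact le_of_eq (hPc f)
    have hsup2 : (⨆ (s : Set X) (_ : MeasurableSet s),
        (sqAtomMeasure ν' s - ((sqAtomMeasure (ν : Measure X)).map ⇑f) s))
        ≤ ∑' y : T, ((b y)^2 - (A f (y:X))^2) := by
      refine iSup₂_le fun s hs => ?_
      rw [hαβ f s hs, hβs s hs]
      calc (∑' y : X, (b y)^2 * s.indicator 1 y) - ∑' y : X, (A f y)^2 * s.indicator 1 y
          ≤ ∑' y : X, ((b y)^2 * s.indicator 1 y - (A f y)^2 * s.indicator 1 y) :=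
            tsum_tsub_le _ _
        _ ≤ ∑' y : X, ((b y)^2 - (A f y)^2) := by
            refine ENNReal.tsum_le_tsum fun y => ?_
            by_cases hy : y ∈ s
            · simp [Set.indicator_of_mem hy]
            · simp [Set.indicator_of_notMem hy]
        _ = (∑' y : T, ((b y)^2 - (A f (y:X))^2))
            + ∑' y : ↥Tᶜ, ((b (y:X))^2 - (A f (y:X))^2) :=
            (Summable.tsum_add_tsum_compl ENNReal.summable ENNReal.summable).symm
        _ ≤ ∑' y : T, ((b y)^2 - (A f (y:X))^2) := by
            have hz : (∑' y : ↥Tᶜ, ((b (y:X))^2 - (A f (y:X))^2)) = 0 := by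
              refine (Summable.tsum_eq_zero_iff ENNReal.summable).2 fun y => ?_
              rw [hbT y y.2]
              simp [zero_tsub]
            rw [hz, add_zero]
    have hT8 : (∑' y : T, (A f (y:X) + b y)^2) ≤ 8 * E := by
      calc (∑' y : T, (A f (y:X) + b y)^2)
          ≤ ∑' y : T, 4 * ((A f (y:X))^2 + (b y)^2) :=
            ENNReal.tsum_le_tsum fun y => my_add_sq_le _ _
      _ = 4 * (Q f + E') := by rw [ENNReal.tsum_mul_left, ENNReal.tsum_add, hE'T]
      _ ≤ 4 * (E + E) := by
          gcongr
          · exact hQle f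
          · exact hE'W.trans hWle
      _ = 8 * E := by ring
    have hdabs : (∑' y : T, (((A f (y:X))^2 - (b y)^2) + ((b y)^2 - (A f (y:X))^2)))
        ≤ ENNReal.ofReal (ε/2) * E := by
      calc ∑' y : T, (((A f (y:X))^2 - (b y)^2) + ((b y)^2 - (A f (y:X))^2))
          ≤ ∑' y : T, (((A f (y:X) - b y)^2 + (b y - A f (y:X))^2) ^ (1/2:ℝ))
            * (A f (y:X) + b y) :=
            ENNReal.tsum_le_tsum fun y => abs_sq_sub_le (hAne f y) (hbne y)
        _ ≤ (∑' y : T, (((A f (y:X) - b y)^2 + (b y - A f (y:X))^2) ^ (1/2:ℝ))^2) ^ (1/2:ℝ)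
            * (∑' y : T, (A f (y:X) + b y)^2) ^ (1/2:ℝ) := tsum_CS _ _
        _ = (S f) ^ (1/2:ℝ) * (∑' y : T, (A f (y:X) + b y)^2) ^ (1/2:ℝ) := by
            congr 2
            exact tsum_congr fun y => rpow_half_sq _
        _ ≤ (c1) ^ (1/2:ℝ) * (8 * E) ^ (1/2:ℝ) :=
            mul_le_mul' (ENNReal.rpow_le_rpow hfS.le (by norm_num))
              (ENNReal.rpow_le_rpow hT8 (by norm_num))
        _ = (c1 * (8 * E)) ^ (1/2:ℝ) := (ENNReal.mul_rpow_of_nonneg _ _ (by norm_num)).symm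
        _ = ENNReal.ofReal (ε/2) * E := by
            have h8 : (8:ℝ≥0∞) = ENNReal.ofReal 8 := by norm_num
            have hkey : c1 * (8 * E) = (ENNReal.ofReal (ε/2) * E)^2 := by
              have e1 : c1 * (8*E) = (ENNReal.ofReal (ε^2/32) * ENNReal.ofReal 8) * E^2 := by
                rw [hc1def, ← h8]; ring
              have e2 : ENNReal.ofReal (ε^2/32) * ENNReal.ofReal 8
                  = ENNReal.ofReal ((ε/2)^2) := by
                rw [← ENNReal.ofReal_mul (by positivity)]; congr 1; ring
              rw [e1, e2, ENNReal.ofReal_pow (by positivity)]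
              ring
            rw [hkey, sq_rpow_half]
    calc tvDist ((sqAtomMeasure (ν : Measure X)).map ⇑f) (sqAtomMeasure ν')
        = (⨆ (s : Set X) (_ : MeasurableSet s),
            (((sqAtomMeasure (ν : Measure X)).map ⇑f) s - sqAtomMeasure ν' s))
          + (⨆ (s : Set X) (_ : MeasurableSet s),
            (sqAtomMeasure ν' s - ((sqAtomMeasure (ν : Measure X)).map ⇑f) s)) := rfl
      _ ≤ ((∑' y : T, ((A f (y:X))^2 - (b y)^2)) + P f)
          + ∑' y : T, ((b y)^2 - (A f (y:X))^2) := add_le_add hsup1 hsup2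
      _ = (∑' y : T, (((A f (y:X))^2 - (b y)^2) + ((b y)^2 - (A f (y:X))^2))) + P f := by
          rw [ENNReal.tsum_add]; ring
      _ ≤ ENNReal.ofReal (ε/2) * E + c2 := add_le_add hdabs hfP.le
      _ = ENNReal.ofReal ε * E := by
          rw [hc2def, ← add_mul, ← ENNReal.ofReal_add (by positivity) (by positivity)]
          norm_num
  -- final assembly
  set U : Set (X ≃ₜ X) := {f : X ≃ₜ X | c1 ≤ S f} ∪ {f : X ≃ₜ X | c2 ≤ P f} with hUdef
  have hU : (μ : Measure (X ≃ₜ X)) U ≤ ENNReal.ofReal ε := by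
    calc (μ : Measure (X ≃ₜ X)) U
        ≤ (μ : Measure (X ≃ₜ X)) {f : X ≃ₜ X | c1 ≤ S f}
          + (μ : Measure (X ≃ₜ X)) {f : X ≃ₜ X | c2 ≤ P f} := measure_union_le _ _
    _ ≤ ENNReal.ofReal (ε/2) + ENNReal.ofReal (ε/2) := add_le_add hMS hMP
    _ = ENNReal.ofReal ε := by
        rw [← ENNReal.ofReal_add (by positivity) (by positivity)]; norm_num
  have hsub : Uᶜ ⊆ {f : X ≃ₜ X |
      tvDist ((sqAtomMeasure (ν : Measure X)).map ⇑f) (sqAtomMeasure ν')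
        ≤ ENNReal.ofReal ε * E} := by
    intro f hf
    rw [hUdef, Set.compl_union, Set.mem_inter_iff] at hf
    obtain ⟨h1, h2⟩ := hf
    simp only [Set.mem_compl_iff, Set.mem_setOf_eq, not_le] at h1 h2
    exact hpoint f h1 h2
  have hfinal1 : ENNReal.ofReal (1-ε) = 1 - ENNReal.ofReal ε := by
    rw [ENNReal.ofReal_sub _ hε.le, ENNReal.ofReal_one]
  calc ENNReal.ofReal (1-ε) = 1 - ENNReal.ofReal ε := hfinal1
  _ ≤ 1 - (μ : Measure (X ≃ₜ X)) U := tsub_le_tsub_left hU 1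
  _ ≤ (μ : Measure (X ≃ₜ X)) Uᶜ := by
      rw [tsub_le_iff_right]
      calc (1:ℝ≥0∞) = (μ : Measure (X ≃ₜ X)) Set.univ := measure_univ.symm
      _ = (μ : Measure (X ≃ₜ X)) (Uᶜ ∪ U) := by rw [Set.compl_union_self]
      _ ≤ (μ : Measure (X ≃ₜ X)) Uᶜ + (μ : Measure (X ≃ₜ X)) U := measure_union_le _ _
  _ ≤ _ := measure_mono hsub
end
end
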